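/- arXiv:cs/0701019 — 6 statements merged into one kernel-verified Lean document; each statement's English description precedes it below -/
import Mathlib

section
/- Let Z12, Z13, Z23 be positive reals with Z13 < M_H(Z12, Z23), and define A1 = Z23·(1/Z13 − 1/Z12), A2 = Z12·(1/Z13 − 1/Z23), and t* = (log(Z23·log A2/(Z12·log A1)) + log A2)/(log A1 + log A2). Then 0 ≤ t* ≤ 1. -/
/-- Harmonic-mean-type quantity `M_H(x,y) = 1/(1/x + 1/y)`. -/
noncomputable def MH (x y : ℝ) : ℝ := 1 / (1 / x + 1 / y)

lemma key_ineq (a b d : ℝ) (ha : 0 < a) (hb : 0 < b) (hd : 0 < d) :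
    a * Real.log (b * d + 1) ≤ b * ((a * d + 1) * Real.log (a * d + 1)) := by
  have hB : (0:ℝ) < b * d + 1 := by positivity
  have hA : (0:ℝ) < a * d + 1 := by positivity
  have h1 : Real.log (b * d + 1) ≤ b * d := by
    have := Real.log_le_sub_one_of_pos hB; linarith
  have h3 : 1 - 1 / (a * d + 1) ≤ Real.log (a * d + 1) := by
    have := Real.log_le_sub_one_of_pos (show (0:ℝ) < (a * d + 1)⁻¹ by positivity)
    rw [Real.log_inv] at this
    have hne : (a * d + 1) ≠ 0 := ne_of_gt hA
    rw [one_div]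
    linarith
  have h2 : a * d ≤ (a * d + 1) * Real.log (a * d + 1) := by
    have heq : (a * d + 1) * (1 - 1 / (a * d + 1)) = a * d := by field_simp; ring
    nlinarith
  nlinarith [mul_le_mul_of_nonneg_left h1 ha.le, mul_le_mul_of_nonneg_left h2 hb.le]

theorem tstar_mem_unit_interval (Z12 Z13 Z23 A1 A2 tstar : ℝ)
    (h12 : 0 < Z12) (h13 : 0 < Z13) (h23 : 0 < Z23)
    (h : Z13 < MH Z12 Z23)
    (hA1 : A1 = Z23 * (1 / Z13 - 1 / Z12))
    (hA2 : A2 = Z12 * (1 / Z13 - 1 / Z23))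
    (ht : tstar = (Real.log (Z23 * Real.log A2 / (Z12 * Real.log A1)) + Real.log A2) /
      (Real.log A1 + Real.log A2)) :
    0 ≤ tstar ∧ tstar ≤ 1 := by
  set d : ℝ := 1 / Z13 - 1 / Z12 - 1 / Z23 with hd_def
  have hs : (0:ℝ) < 1 / Z12 + 1 / Z23 := by positivity
  have hd : 0 < d := by
    have hlt : Z13 < 1 / (1 / Z12 + 1 / Z23) := h
    rw [lt_div_iff₀ hs] at hlt
    have : 1 / Z12 + 1 / Z23 < 1 / Z13 := by
      rw [lt_div_iff₀ h13]
      nlinarith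
    simp only [hd_def]; linarith
  have hA1' : A1 = Z23 * d + 1 := by
    rw [hA1, hd_def]; field_simp; ring
  have hA2' : A2 = Z12 * d + 1 := by
    rw [hA2, hd_def]; field_simp; ring
  have hA1pos : (1:ℝ) < A1 := by rw [hA1']; nlinarith
  have hA2pos : (1:ℝ) < A2 := by rw [hA2']; nlinarith
  have hL1 : 0 < Real.log A1 := Real.log_pos hA1pos
  have hL2 : 0 < Real.log A2 := Real.log_pos hA2pos
  -- two key inequalities
  have k1 : Z12 * Real.log A1 ≤ Z23 * (A2 * Real.log A2) := by
    have := key_ineq Z12 Z23 d h12 h23 hd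
    rw [hA1', hA2']; linarith [this]
  have k2 : Z23 * Real.log A2 ≤ Z12 * (A1 * Real.log A1) := by
    have := key_ineq Z23 Z12 d h23 h12 hd
    rw [hA1', hA2']; linarith [this]
  set q : ℝ := Z23 * Real.log A2 / (Z12 * Real.log A1) with hq_def
  have hden : (0:ℝ) < Z12 * Real.log A1 := by positivity
  have hq : 0 < q := by positivity
  have hA2p : (0:ℝ) < A2 := lt_trans one_pos hA2pos
  have hNsum : Real.log q + Real.log A2 = Real.log (q * A2) :=
    (Real.log_mul (ne_of_gt hq) (ne_of_gt hA2p)).symm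
  have hN0 : 0 ≤ Real.log q + Real.log A2 := by
    rw [hNsum]
    apply Real.log_nonneg
    rw [hq_def, div_mul_eq_mul_div, le_div_iff₀ hden]
    nlinarith
  have hND : Real.log q + Real.log A2 ≤ Real.log A1 + Real.log A2 := by
    have : Real.log q ≤ Real.log A1 := by
      apply Real.log_le_log hq
      rw [hq_def, div_le_iff₀ hden]
      nlinarith
    linarith
  have hD : 0 < Real.log A1 + Real.log A2 := by linarith
  rw [ht]
  constructor
  · exact div_nonneg hN0 hD.le
  · rw [div_le_one hD]; exact hND
end

section
/- Let Z12, Z13, Z23 be positive reals with Z13 < M_H(Z12, Z23), A1 = Z23·(1/Z13 − 1/Z12), A2 = Z12·(1/Z13 − 1/Z23), and let t be any real in [0,1]. Then 1/Z13 − A1^t/Z23 − A2^(1−t)/Z12 ≥ 0. -/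
theorem asymptotic_coefficient_nonneg (Z12 Z13 Z23 A1 A2 t : ℝ)
    (h12 : 0 < Z12) (h13 : 0 < Z13) (h23 : 0 < Z23)
    (h : Z13 < MH Z12 Z23)
    (hA1 : A1 = Z23 * (1 / Z13 - 1 / Z12))
    (hA2 : A2 = Z12 * (1 / Z13 - 1 / Z23))
    (ht0 : 0 ≤ t) (ht1 : t ≤ 1) :
    0 ≤ 1 / Z13 - A1 ^ t / Z23 - A2 ^ (1 - t) / Z12 := by
  have hs : 0 < 1 / Z12 + 1 / Z23 := by positivity
  have h23' : 0 < 1 / Z23 := by positivity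
  have h12' : 0 < 1 / Z12 := by positivity
  have hkey : 1 / Z12 + 1 / Z23 < 1 / Z13 := by
    rw [MH] at h
    have h' : Z13 * (1 / Z12 + 1 / Z23) < 1 := (lt_div_iff₀ hs).mp h
    rw [lt_div_iff₀ h13]
    nlinarith
  have hA1pos : (0:ℝ) ≤ A1 := by
    rw [hA1]; nlinarith
  have hA2pos : (0:ℝ) ≤ A2 := by
    rw [hA2]; nlinarith
  have h1 : A1 ^ t * (1:ℝ) ^ (1 - t) ≤ t * A1 + (1 - t) * 1 :=
    Real.geom_mean_le_arith_mean2_weighted ht0 (by linarith) hA1pos zero_le_one (by ring)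
  have h2 : A2 ^ (1 - t) * (1:ℝ) ^ t ≤ (1 - t) * A2 + t * 1 :=
    Real.geom_mean_le_arith_mean2_weighted (by linarith) ht0 hA2pos zero_le_one (by ring)
  rw [Real.one_rpow, mul_one] at h1 h2
  have hb1 : A1 ^ t / Z23 ≤ (t * A1 + (1 - t) * 1) / Z23 := by gcongr
  have hb2 : A2 ^ (1 - t) / Z12 ≤ ((1 - t) * A2 + t * 1) / Z12 := by gcongr
  have hsum : (t * A1 + (1 - t) * 1) / Z23 + ((1 - t) * A2 + t * 1) / Z12 = 1 / Z13 := by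
    rw [hA1, hA2]
    field_simp
    ring
  linarith
end

section
/- For all real K ≥ 0 and all real t with 0 < t ≤ 1, (1−t)·exp(K/t) + t − exp(K·(1−t)/t) ≥ 0. -/
theorem exp_combination_nonneg (K t : ℝ) (hK : 0 ≤ K) (ht0 : 0 < t) (ht1 : t ≤ 1) :
    0 ≤ (1 - t) * Real.exp (K / t) + t - Real.exp (K * (1 - t) / t) := by
  have h := convexOn_exp.2 (Set.mem_univ (K / t)) (Set.mem_univ (0 : ℝ))
    (by linarith : (0:ℝ) ≤ 1 - t) ht0.le (by ring)
  simp only [smul_eq_mul, mul_zero, add_zero, Real.exp_zero, mul_one] at h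
  have heq : (1 - t) * (K / t) = K * (1 - t) / t := by ring
  rw [heq] at h
  linarith
end

section
/- Let Z13, Z12, Z23 be i.i.d. Exp(1) random variables and S > 0. Then P( {Z12 ≤ 1/S or Z13 + Z23 ≤ 1/S} and Z13 < Z12 ) = (1/2)·(1 − exp(−2/S)) − (1/S)·exp(−2/S). -/
open scoped ENNReal NNReal
open MeasureTheory ProbabilityTheory Real Set

lemma exp1_Iic (a : ℝ) : expMeasure 1 (Iic a) = ENNReal.ofReal (1 - Real.exp (-a)) := by
  haveI : IsProbabilityMeasure (expMeasure 1) := isProbabilityMeasure_expMeasure one_pos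
  have h := cdf_expMeasure_eq one_pos a
  rw [cdf_eq_real, measureReal_def] at h
  rw [← ENNReal.ofReal_toReal (measure_ne_top _ _), h]
  split_ifs with h0
  · norm_num
  · rw [ENNReal.ofReal_zero]
    symm
    rw [ENNReal.ofReal_eq_zero]
    have : (1:ℝ) ≤ Real.exp (-a) := by
      rw [Real.one_le_exp_iff]; linarith
    linarith

lemma exp1_Ioi {a : ℝ} (ha : 0 ≤ a) : expMeasure 1 (Ioi a) = ENNReal.ofReal (Real.exp (-a)) := by
  haveI : IsProbabilityMeasure (expMeasure 1) := isProbabilityMeasure_expMeasure one_pos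
  have : Ioi a = (Iic a)ᶜ := compl_Iic.symm
  rw [this, measure_compl measurableSet_Iic (measure_ne_top _ _), measure_univ, exp1_Iic]
  rw [← ENNReal.ofReal_one, ← ENNReal.ofReal_sub _ (by simp [Real.exp_le_one_iff]; linarith)]
  norm_num

lemma exp1_Ioc {a b : ℝ} (ha : 0 ≤ a) (hab : a ≤ b) :
    expMeasure 1 (Ioc a b) = ENNReal.ofReal (Real.exp (-a) - Real.exp (-b)) := by
  haveI : IsProbabilityMeasure (expMeasure 1) := isProbabilityMeasure_expMeasure one_pos
  have : Ioc a b = Iic b \ Iic a := (Iic_sdiff_Iic).symm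
  rw [this, measure_diff (Iic_subset_Iic.2 hab) measurableSet_Iic.nullMeasurableSet
    (measure_ne_top _ _), exp1_Iic, exp1_Iic,
    ← ENNReal.ofReal_sub _ (by simp [Real.exp_le_one_iff]; linarith)]
  ring_nf

lemma inner_set_eq (t x : ℝ) :
    {q : ℝ × ℝ | (q.1 ≤ t ∨ x + q.2 ≤ t) ∧ x < q.1}
      = (Ioc x t ×ˢ (univ : Set ℝ)) ∪ ((Ioi (max x t)) ×ˢ Iic (t - x)) := by
  ext ⟨y, z⟩
  simp only [mem_setOf_eq, mem_union, mem_prod, mem_Ioc, mem_univ, and_true,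
    mem_Ioi, mem_Iic, max_lt_iff]
  constructor
  · rintro ⟨h1 | h2, h3⟩
    · exact Or.inl ⟨h3, h1⟩
    · rcases le_or_gt y t with hy | hy
      · exact Or.inl ⟨h3, hy⟩
      · exact Or.inr ⟨⟨h3, hy⟩, by linarith⟩
  · rintro (⟨h1, h2⟩ | ⟨⟨h1, h2⟩, h3⟩)
    · exact ⟨Or.inl h2, h1⟩
    · exact ⟨Or.inr (by linarith), h1⟩

lemma inner_measure (t x : ℝ) (h0 : 0 ≤ x) (ht : 0 < t) :
    (expMeasure 1).prod (expMeasure 1) {q : ℝ × ℝ | (q.1 ≤ t ∨ x + q.2 ≤ t) ∧ x < q.1}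
      = if x < t then ENNReal.ofReal (Real.exp (-x) - Real.exp (x - 2*t)) else 0 := by
  haveI : IsProbabilityMeasure (expMeasure 1) := isProbabilityMeasure_expMeasure one_pos
  rw [inner_set_eq, measure_union ?dis (measurableSet_Ioi.prod measurableSet_Iic),
    Measure.prod_prod, Measure.prod_prod]
  case dis =>
    rw [Set.disjoint_left]
    rintro ⟨y, z⟩ ⟨hy, -⟩ ⟨hy2, -⟩
    exact absurd hy.2 (not_le.2 (lt_of_le_of_lt (le_max_right x t) hy2))
  split_ifs with hxt
  · rw [max_eq_right hxt.le, measure_univ, exp1_Ioc h0 hxt.le, exp1_Ioi (le_of_lt ht),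
      exp1_Iic, mul_one,
      ← ENNReal.ofReal_mul (Real.exp_nonneg _),
      ← ENNReal.ofReal_add (by simp [Real.exp_le_exp]; linarith)
        (by
          have : Real.exp (-(t - x)) ≤ 1 := by rw [Real.exp_le_one_iff]; linarith
          nlinarith [Real.exp_nonneg (-t)])]
    congr 1
    rw [mul_sub, mul_one, ← Real.exp_add]
    ring_nf
  · rw [Ioc_eq_empty hxt, measure_empty, zero_mul, zero_add]
    have h2 : expMeasure 1 (Iic (t - x)) = 0 := by
      rw [exp1_Iic, ENNReal.ofReal_eq_zero]
      have : (1:ℝ) ≤ Real.exp (-(t - x)) := by rw [Real.one_le_exp_iff]; linarith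
      linarith
    rw [h2, mul_zero]

lemma lintegral_exp1 {f : ℝ → ℝ≥0∞} (hf : Measurable f) :
    ∫⁻ x, f x ∂(expMeasure 1) = ∫⁻ x, exponentialPDF 1 x * f x ∂(volume : Measure ℝ) := by
  have hpdf : Measurable (exponentialPDF 1) := by
    unfold exponentialPDF
    exact (measurable_exponentialPDFReal 1).ennreal_ofReal
  rw [show expMeasure 1 = volume.withDensity (exponentialPDF 1) from rfl,
    lintegral_withDensity_eq_lintegral_mul _ hpdf hf]
  rfl


/-- `p.1` is `Z13`, `p.2.1` is `Z12`, `p.2.2` is `Z23`, all i.i.d. `Exp(1)`. -/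
theorem prob_df_event (S : ℝ) (hS : 0 < S) :
    ((expMeasure 1).prod ((expMeasure 1).prod (expMeasure 1)))
      {p : ℝ × ℝ × ℝ | (p.2.1 ≤ 1 / S ∨ p.1 + p.2.2 ≤ 1 / S) ∧ p.1 < p.2.1} =
      ENNReal.ofReal ((1 / 2) * (1 - Real.exp (-2 / S)) - (1 / S) * Real.exp (-2 / S)) := by
  haveI : IsProbabilityMeasure (expMeasure 1) := isProbabilityMeasure_expMeasure one_pos
  set t : ℝ := 1 / S with ht
  have ht0 : 0 < t := by positivity
  have hE : MeasurableSet {p : ℝ × ℝ × ℝ | (p.2.1 ≤ t ∨ p.1 + p.2.2 ≤ t) ∧ p.1 < p.2.1} := by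
    rw [Set.setOf_and, Set.setOf_or]
    exact ((measurableSet_le measurable_snd.fst measurable_const).union
      (measurableSet_le (measurable_fst.add measurable_snd.snd) measurable_const)).inter
      (measurableSet_lt measurable_fst measurable_snd.fst)
  rw [Measure.prod_apply hE]
  have hpre : ∀ x : ℝ, (Prod.mk x ⁻¹' {p : ℝ × ℝ × ℝ | (p.2.1 ≤ t ∨ p.1 + p.2.2 ≤ t) ∧ p.1 < p.2.1})
      = {q : ℝ × ℝ | (q.1 ≤ t ∨ x + q.2 ≤ t) ∧ x < q.1} := fun x => rfl
  simp only [hpre]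
  have hg : Measurable fun x : ℝ =>
      (expMeasure 1).prod (expMeasure 1) {q : ℝ × ℝ | (q.1 ≤ t ∨ x + q.2 ≤ t) ∧ x < q.1} := by
    have : ∀ x : ℝ, {q : ℝ × ℝ | (q.1 ≤ t ∨ x + q.2 ≤ t) ∧ x < q.1}
        = Prod.mk x ⁻¹' {p : ℝ × ℝ × ℝ | (p.2.1 ≤ t ∨ p.1 + p.2.2 ≤ t) ∧ p.1 < p.2.1} :=
      fun x => rfl
    simp only [this]
    exact measurable_measure_prodMk_left hE
  rw [lintegral_exp1 hg]
  have hcongr : ∀ x : ℝ, exponentialPDF 1 x *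
      (expMeasure 1).prod (expMeasure 1) {q : ℝ × ℝ | (q.1 ≤ t ∨ x + q.2 ≤ t) ∧ x < q.1}
      = Set.indicator (Ico 0 t) (fun x => ENNReal.ofReal (Real.exp (-(2*x)) - Real.exp (-(2*t)))) x := by
    intro x
    rcases lt_or_ge x 0 with hx | hx
    · rw [exponentialPDF_of_neg hx, zero_mul, Set.indicator_of_notMem (by simp [hx.not_ge])]
    · rw [inner_measure t x hx ht0]
      rcases lt_or_ge x t with hxt | hxt
      · rw [if_pos hxt, Set.indicator_of_mem (show x ∈ Ico 0 t from ⟨hx, hxt⟩),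
          exponentialPDF_of_nonneg hx, ← ENNReal.ofReal_mul (by positivity)]
        congr 1
        rw [one_mul, mul_sub, ← Real.exp_add, ← Real.exp_add]
        ring_nf
      · rw [if_neg (not_lt.2 hxt), mul_zero,
          Set.indicator_of_notMem (by simp [not_lt.2 hxt])]
  rw [lintegral_congr hcongr, lintegral_indicator measurableSet_Ico]
  have hint : IntegrableOn (fun x => Real.exp (-(2*x)) - Real.exp (-(2*t))) (Ico 0 t) volume := by
    exact ((by continuity : Continuous fun x => Real.exp (-(2*x)) - Real.exp (-(2*t))).continuousOn.integrableOn_Icc).mono_set Ico_subset_Icc_self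
  rw [← ofReal_integral_eq_lintegral_ofReal hint
    ((ae_restrict_iff' measurableSet_Ico).2 (Filter.Eventually.of_forall fun x hx => by
      simp only [Pi.zero_apply, sub_nonneg, Real.exp_le_exp]
      have h2 := hx.2
      linarith))]
  congr 1
  rw [MeasureTheory.integral_Ico_eq_integral_Ioo, ← MeasureTheory.integral_Ioc_eq_integral_Ioo, ← intervalIntegral.integral_of_le ht0.le]
  have hderiv : ∀ x ∈ Set.uIcc (0:ℝ) t,
      HasDerivAt (fun y => -Real.exp (-(2*y))/2 - Real.exp (-(2*t))*y)
        (Real.exp (-(2*x)) - Real.exp (-(2*t))) x := by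
    intro x _
    have h1 : HasDerivAt (fun y : ℝ => -2*y) (-2) x := by
      simpa using (hasDerivAt_id x).const_mul (-2)
    have h2 : HasDerivAt (fun y : ℝ => Real.exp (-(2*y))) (Real.exp (-(2*x)) * (-2)) x := by
      have := h1.exp
      simpa [neg_mul] using this
    have h3 := ((h2.neg).div_const 2).sub ((hasDerivAt_id x).const_mul (Real.exp (-(2*t))))
    refine h3.congr_deriv ?_
    ring
  rw [intervalIntegral.integral_eq_sub_of_hasDerivAt hderiv
    ((Continuous.sub (by continuity) continuous_const).intervalIntegrable 0 t)]
  have h2t : -(2*t) = -2/S := by rw [ht]; field_simp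
  rw [h2t]
  simp only [mul_zero, neg_zero, Real.exp_zero]
  ring
end

section
/- Let Z13, Z12, Z23 be i.i.d. Exp(1) random variables. Define B̂(Z) = sqrt(2/Z13)·sqrt(1/Z12 + 1/Z23) if Z13 < M_H(Z12, Z23), and B̂(Z) = 1/Z13 otherwise, where M_H(x,y) = 1/(1/x+1/y). Then E[B̂(Z)] < ∞. -/
open MeasureTheory ProbabilityTheory

lemma sqrt_add_le_aux {x y : ℝ} (hx : 0 ≤ x) (hy : 0 ≤ y) :
    Real.sqrt (x + y) ≤ Real.sqrt x + Real.sqrt y := by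
  have h1 := Real.sq_sqrt hx
  have h2 := Real.sq_sqrt hy
  have h3 := Real.sqrt_nonneg x
  have h4 := Real.sqrt_nonneg y
  calc Real.sqrt (x + y) ≤ Real.sqrt ((Real.sqrt x + Real.sqrt y) ^ 2) :=
        Real.sqrt_le_sqrt (by nlinarith)
    _ = Real.sqrt x + Real.sqrt y := Real.sqrt_sq (by positivity)

lemma integrable_sqrt_inv_exp :
    Integrable (fun x : ℝ => Real.sqrt (1 / x)) (expMeasure 1) := by
  have hmeas : Measurable (gammaPDF 1 1) :=
    (measurable_gammaPDFReal 1 1).ennreal_ofReal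
  rw [expMeasure, gammaMeasure, integrable_withDensity_iff hmeas
    (Filter.Eventually.of_forall fun x => ENNReal.ofReal_lt_top)]
  have key : IntegrableOn (fun x : ℝ => Real.exp (-x) * x ^ ((1:ℝ)/2 - 1)) (Set.Ioi 0) :=
    Real.GammaIntegral_convergent (by norm_num)
  have hind : Integrable
      ((Set.Ioi (0:ℝ)).indicator fun x => Real.exp (-x) * x ^ ((1:ℝ)/2 - 1)) :=
    key.integrable_indicator measurableSet_Ioi
  refine hind.congr (Filter.Eventually.of_forall fun x => ?_)
  rcases lt_trichotomy x 0 with hx | hx | hx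
  · simp [Set.indicator, hx.not_gt, gammaPDF_of_neg hx]
  · subst hx
    simp [Set.indicator]
  · simp only [Set.indicator_of_mem (Set.mem_Ioi.mpr hx)]
    have h0 : (gammaPDF 1 1 x).toReal = Real.exp (-x) := by
      rw [gammaPDF_of_nonneg hx.le, ENNReal.toReal_ofReal (by positivity)]
      simp [Real.Gamma_one]
    rw [h0]
    have hs : Real.sqrt (1 / x) = x ^ ((1:ℝ)/2 - 1) := by
      rw [Real.sqrt_eq_rpow, show (1:ℝ)/2 - 1 = -(1/2) by norm_num,
        Real.rpow_neg hx.le, ← Real.inv_rpow hx.le, one_div x]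
    rw [hs, mul_comm]

lemma exp_ae_pos : ∀ᵐ x ∂(expMeasure 1), 0 < x := by
  rw [ae_iff]
  have h : {x : ℝ | ¬ 0 < x} = Set.Iic 0 := by ext x; simp
  rw [h]
  show expMeasure 1 (Set.Iic 0) = 0
  rw [expMeasure, gammaMeasure, withDensity_apply _ measurableSet_Iic,
    ← setLIntegral_congr Iio_ae_eq_Iic]
  exact lintegral_gammaPDF_of_nonpos le_rfl

/-- `p.1` is `Z13`, `p.2.1` is `Z12`, `p.2.2` is `Z23`, all i.i.d. `Exp(1)`.
The random variable `B̂(Z)` has finite expectation, i.e. it is integrable. -/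
theorem Bhat_integrable :
    Integrable (fun p : ℝ × ℝ × ℝ =>
        if p.1 < MH p.2.1 p.2.2 then
          Real.sqrt (2 / p.1) * Real.sqrt (1 / p.2.1 + 1 / p.2.2)
        else 1 / p.1)
      ((expMeasure 1).prod ((expMeasure 1).prod (expMeasure 1))) := by
  haveI : IsProbabilityMeasure (expMeasure 1) := isProbabilityMeasure_expMeasure one_pos
  set μ := expMeasure 1 with hμ
  -- the dominating function
  have hg : Integrable (fun p : ℝ × ℝ × ℝ =>
      Real.sqrt 2 * (Real.sqrt (1 / p.1) *
        (Real.sqrt (1 / p.2.1) + Real.sqrt (1 / p.2.2)))) (μ.prod (μ.prod μ)) := by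
    have h2 : Integrable (fun q : ℝ × ℝ => Real.sqrt (1 / q.1) + Real.sqrt (1 / q.2))
        (μ.prod μ) := by
      have a1 : Integrable (fun q : ℝ × ℝ => Real.sqrt (1 / q.1) * 1) (μ.prod μ) :=
        integrable_sqrt_inv_exp.mul_prod (integrable_const 1)
      have a2 : Integrable (fun q : ℝ × ℝ => 1 * Real.sqrt (1 / q.2)) (μ.prod μ) :=
        (integrable_const 1).mul_prod integrable_sqrt_inv_exp
      simpa [Pi.add_def] using a1.add a2
    exact (integrable_sqrt_inv_exp.mul_prod h2).const_mul _
  -- measurability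
  have hmeasf : Measurable (fun p : ℝ × ℝ × ℝ =>
      if p.1 < MH p.2.1 p.2.2 then
        Real.sqrt (2 / p.1) * Real.sqrt (1 / p.2.1 + 1 / p.2.2)
      else 1 / p.1) := by
    have hMH : Measurable fun p : ℝ × ℝ × ℝ => MH p.2.1 p.2.2 := by
      unfold MH; fun_prop
    refine Measurable.ite (measurableSet_lt measurable_fst hMH) ?_ (by fun_prop)
    fun_prop
  -- a.e. positivity
  have h1 : ∀ᵐ p : ℝ × ℝ × ℝ ∂(μ.prod (μ.prod μ)), 0 < p.1 :=
    Measure.quasiMeasurePreserving_fst.ae exp_ae_pos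
  have h2 : ∀ᵐ p : ℝ × ℝ × ℝ ∂(μ.prod (μ.prod μ)), 0 < p.2.1 :=
    (Measure.quasiMeasurePreserving_fst.comp Measure.quasiMeasurePreserving_snd).ae exp_ae_pos
  have h3 : ∀ᵐ p : ℝ × ℝ × ℝ ∂(μ.prod (μ.prod μ)), 0 < p.2.2 :=
    (Measure.quasiMeasurePreserving_snd.comp Measure.quasiMeasurePreserving_snd).ae exp_ae_pos
  refine hg.mono' hmeasf.aestronglyMeasurable ?_
  filter_upwards [h1, h2, h3] with p ha hb hc
  obtain ⟨a, b, c⟩ := p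
  simp only at ha hb hc ⊢
  have hone : (1:ℝ) ≤ Real.sqrt 2 := by
    rw [show (1:ℝ) = Real.sqrt 1 from (Real.sqrt_one).symm]
    exact Real.sqrt_le_sqrt (by norm_num)
  have hsum : Real.sqrt (1 / b + 1 / c) ≤ Real.sqrt (1 / b) + Real.sqrt (1 / c) :=
    sqrt_add_le_aux (by positivity) (by positivity)
  by_cases hcond : a < MH b c
  · rw [if_pos hcond, Real.norm_eq_abs, abs_of_nonneg (by positivity),
      show (2:ℝ) / a = 2 * (1 / a) by ring, Real.sqrt_mul (by norm_num), mul_assoc]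
    gcongr
  · rw [if_neg hcond]
    have hMHpos : 0 < MH b c := by unfold MH; positivity
    have hle : MH b c ≤ a := not_lt.mp hcond
    have hsa : Real.sqrt (1 / a) ≤ Real.sqrt (1 / b) + Real.sqrt (1 / c) := by
      have e : 1 / MH b c = 1 / b + 1 / c := by rw [MH, one_div_one_div]
      have h' : Real.sqrt (1 / a) ≤ Real.sqrt (1 / b + 1 / c) := by
        rw [← e]; exact Real.sqrt_le_sqrt (one_div_le_one_div_of_le hMHpos hle)
      exact h'.trans hsum
    rw [Real.norm_eq_abs, abs_of_nonneg (by positivity)]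
    calc 1 / a = Real.sqrt (1 / a) * Real.sqrt (1 / a) :=
          (Real.mul_self_sqrt (by positivity)).symm
      _ ≤ Real.sqrt (1 / a) * (Real.sqrt (1 / b) + Real.sqrt (1 / c)) := by
          gcongr
      _ ≤ Real.sqrt 2 * (Real.sqrt (1 / a) * (Real.sqrt (1 / b) + Real.sqrt (1 / c))) :=
          le_mul_of_one_le_left (by positivity) hone
end

section
/- For fixed positive reals Z12, Z13, Z23 with Z12 > Z13, the value max over α, β ∈ [0,1] of min{ α·Z13 + (1−α)·Z23 + 2·sqrt((1−β)·α·(1−α)·Z13·Z23), α·β·Z12 } equals Z12·(Z13+Z23)/(Z12+Z23). -/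
theorem df_power_split_max (Z12 Z13 Z23 : ℝ) (h12 : 0 < Z12) (h13 : 0 < Z13) (h23 : 0 < Z23)
    (h : Z13 < Z12) :
    IsGreatest
      {v : ℝ | ∃ α ∈ Set.Icc (0 : ℝ) 1, ∃ β ∈ Set.Icc (0 : ℝ) 1,
        v = min (α * Z13 + (1 - α) * Z23 +
            2 * Real.sqrt ((1 - β) * α * (1 - α) * Z13 * Z23))
          (α * β * Z12)}
      (Z12 * (Z13 + Z23) / (Z12 + Z23)) := by
  have hD : 0 < Z13 * Z12 + 2 * Z13 * Z23 + Z23 ^ 2 := by positivity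
  have hS : 0 < (Z13 + Z23) * (Z12 + Z23) := by positivity
  have hsum : 0 < Z12 + Z23 := by linarith
  constructor
  · -- membership
    set a : ℝ := (Z13 * Z12 + 2 * Z13 * Z23 + Z23 ^ 2) / ((Z13 + Z23) * (Z12 + Z23)) with ha
    set b : ℝ := (Z13 + Z23) ^ 2 / (Z13 * Z12 + 2 * Z13 * Z23 + Z23 ^ 2) with hb
    have ha0 : 0 ≤ a := by positivity
    have ha1 : a ≤ 1 := by
      rw [ha, div_le_one hS]; nlinarith
    have hb0 : 0 ≤ b := by positivity
    have hb1 : b ≤ 1 := by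
      rw [hb, div_le_one hD]; nlinarith
    refine ⟨a, ⟨ha0, ha1⟩, b, ⟨hb0, hb1⟩, ?_⟩
    have hsq : (1 - b) * a * (1 - a) * Z13 * Z23 = ((1 - a) * Z13) ^ 2 := by
      rw [ha, hb]; field_simp; ring
    have hArg : Real.sqrt ((1 - b) * a * (1 - a) * Z13 * Z23) = (1 - a) * Z13 := by
      rw [hsq, Real.sqrt_sq (by nlinarith)]
    have hB : a * b * Z12 = Z12 * (Z13 + Z23) / (Z12 + Z23) := by
      rw [ha, hb]; field_simp
    have hA : a * Z13 + (1 - a) * Z23 + 2 * ((1 - a) * Z13)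
        = Z12 * (Z13 + Z23) / (Z12 + Z23) := by
      rw [ha]; field_simp; ring
    rw [hArg, hA, hB, min_self]
  · -- upper bound
    rintro v ⟨α, ⟨hα0, hα1⟩, β, ⟨hβ0, hβ1⟩, rfl⟩
    set x : ℝ := (1 - β) * α * Z23 with hx
    set y : ℝ := (1 - α) * Z13 with hy
    have hx0 : 0 ≤ x := by rw [hx]; exact mul_nonneg (mul_nonneg (by linarith) hα0) h23.le
    have hy0 : 0 ≤ y := by nlinarith
    have hxy : (1 - β) * α * (1 - α) * Z13 * Z23 = x * y := by rw [hx, hy]; ring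
    have hsqrt : Real.sqrt (x * y) ≤ (x + y) / 2 := by
      have h1 : x * y ≤ ((x + y) / 2) ^ 2 := by nlinarith [sq_nonneg (x - y)]
      calc Real.sqrt (x * y) ≤ Real.sqrt (((x + y) / 2) ^ 2) := Real.sqrt_le_sqrt h1
        _ = (x + y) / 2 := Real.sqrt_sq (by positivity)
    have hA : α * Z13 + (1 - α) * Z23 + 2 * Real.sqrt ((1 - β) * α * (1 - α) * Z13 * Z23)
        ≤ Z13 + (1 - α * β) * Z23 := by
      rw [hxy]
      have : α * Z13 + (1 - α) * Z23 + (x + y) = Z13 + (1 - α * β) * Z23 := by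
        rw [hx, hy]; ring
      linarith
    rcases le_or_gt (α * β * Z12) (Z12 * (Z13 + Z23) / (Z12 + Z23)) with h1 | h1
    · exact le_trans (min_le_right _ _) h1
    · refine le_trans (min_le_left _ _) (le_trans hA ?_)
      rw [div_lt_iff₀ hsum] at h1
      rw [le_div_iff₀ hsum]
      nlinarith
end
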